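/- Let b ≥ 3 and d ≥ 1. Then (1/φ(b))^d · ∑ over all d-tuples (m₁,…,m_d) with 1 ≤ mᵢ ≤ b−1 and gcd(mᵢ,b)=1 of S_{(m₁,…,m_d;b)}(t) equals (1/2^d)·(𝟙[b | t] − 1/b) for every t ∈ ℤ. -/

import Mathlib

noncomputable def xi (b : ℕ) : ℂ := Complex.exp (2 * Real.pi * Complex.I / b)

noncomputable def FDS (b : ℕ) {d : ℕ} (a : Fin d → ℕ) (s : Finset (Fin d)) (t : ℤ) : ℂ :=
  (b : ℂ)⁻¹ * ∑ j ∈ Finset.Ico 1 b,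
    xi b ^ ((j : ℤ) * t) / ∏ i ∈ s, (1 - xi b ^ ((j : ℤ) * (a i : ℤ)))

lemma xi_prim (b : ℕ) (hb : b ≠ 0) : IsPrimitiveRoot (xi b) b :=
  Complex.isPrimitiveRoot_exp b hb

lemma xi_ne_zero (b : ℕ) : xi b ≠ 0 := Complex.exp_ne_zero _

lemma card_S (b : ℕ) (hb : 2 ≤ b) :
    ((Finset.Ico 1 b).filter (fun m => Nat.gcd m b = 1)).card = b.totient := by
  rw [Nat.totient]
  congr 1
  ext m
  simp only [Finset.mem_filter, Finset.mem_Ico, Finset.mem_range, Nat.Coprime]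
  constructor
  · rintro ⟨⟨h1, h2⟩, h3⟩
    exact ⟨h2, by rwa [Nat.gcd_comm]⟩
  · rintro ⟨h2, h3⟩
    rw [Nat.gcd_comm] at h3
    refine ⟨⟨?_, h2⟩, h3⟩
    rcases Nat.eq_zero_or_pos m with rfl | h
    · rw [Nat.gcd_zero_left] at h3; omega
    · exact h

lemma xi_zpow_ne_one (b : ℕ) (hb : 3 ≤ b) (j m : ℕ) (hj : j ∈ Finset.Ico 1 b)
    (hm : m ∈ (Finset.Ico 1 b).filter (fun m => Nat.gcd m b = 1)) :
    xi b ^ ((j : ℤ) * (m : ℤ)) ≠ 1 := by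
  simp only [Finset.mem_filter, Finset.mem_Ico] at hj hm
  intro h
  have hdvd : (b : ℤ) ∣ (j : ℤ) * (m : ℤ) :=
    ((xi_prim b (by omega)).zpow_eq_one_iff_dvd _).mp h
  have : b ∣ j * m := by exact_mod_cast hdvd
  have hcop : Nat.Coprime b m := by
    have := hm.2; rwa [Nat.gcd_comm] at this
  have : b ∣ j := (Nat.Coprime.dvd_of_dvd_mul_right hcop this)
  have := Nat.le_of_dvd (by omega) this
  omega

lemma innerSumAux (b : ℕ) (hb : 3 ≤ b) (j : ℕ) (hj : j ∈ Finset.Ico 1 b) :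
    ∑ m ∈ (Finset.Ico 1 b).filter (fun m => Nat.gcd m b = 1),
      (1 - xi b ^ ((j : ℤ) * (m : ℤ)))⁻¹ = (b.totient : ℂ) / 2 := by
  set S := (Finset.Ico 1 b).filter (fun m => Nat.gcd m b = 1) with hS
  set f : ℕ → ℂ := fun m => (1 - xi b ^ ((j : ℤ) * (m : ℤ)))⁻¹ with hf
  have hmemS : ∀ m ∈ S, (b - m) ∈ S := by
    intro m hm
    simp only [hS, Finset.mem_filter, Finset.mem_Ico] at hm ⊢
    obtain ⟨⟨h1, h2⟩, h3⟩ := hm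
    refine ⟨⟨by omega, by omega⟩, ?_⟩
    have e2 : Nat.gcd m (b - m) = 1 := by
      have h' : Nat.gcd m ((b - m) + m) = Nat.gcd m (b - m) := Nat.gcd_add_self_right _ _
      rw [← h', show (b - m) + m = b by omega]
      exact h3
    calc Nat.gcd (b - m) b = Nat.gcd (b - m) (m + (b - m)) := by
          rw [show m + (b - m) = b by omega]
      _ = Nat.gcd (b - m) m := Nat.gcd_add_self_right _ _
      _ = 1 := by rw [Nat.gcd_comm]; exact e2
  have hrev : ∑ m ∈ S, f (b - m) = ∑ m ∈ S, f m := by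
    apply Finset.sum_nbij' (fun m => b - m) (fun m => b - m)
    · exact hmemS
    · exact hmemS
    · intro m hm
      simp only [hS, Finset.mem_filter, Finset.mem_Ico] at hm
      omega
    · intro m hm
      simp only [hS, Finset.mem_filter, Finset.mem_Ico] at hm
      omega
    · intro m hm; rfl
  have hpair : ∀ m ∈ S, f m + f (b - m) = 1 := by
    intro m hm
    have hmIco : m ∈ Finset.Ico 1 b := (Finset.mem_filter.mp hm).1
    have hmlt : m < b := (Finset.mem_Ico.mp hmIco).2
    set z := xi b ^ ((j : ℤ) * (m : ℤ)) with hz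
    have hz1 : z ≠ 1 := xi_zpow_ne_one b hb j m hj hm
    have hz0 : z ≠ 0 := zpow_ne_zero _ (xi_ne_zero b)
    have hinv : xi b ^ ((j : ℤ) * ((b - m : ℕ) : ℤ)) = z⁻¹ := by
      have hcast : ((b - m : ℕ) : ℤ) = (b : ℤ) - (m : ℤ) := by
        push_cast [Nat.cast_sub (le_of_lt hmlt)]; ring
      rw [hcast, mul_sub, zpow_sub₀ (xi_ne_zero b)]
      have hjb : xi b ^ ((j : ℤ) * (b : ℤ)) = 1 := by
        apply ((xi_prim b (by omega)).zpow_eq_one_iff_dvd _).mpr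
        exact ⟨(j : ℤ), mul_comm _ _⟩
      rw [hjb, one_div]
    simp only [hf, hinv, ← hz]
    have h1 : (1 : ℂ) - z ≠ 0 := sub_ne_zero.mpr (Ne.symm hz1)
    have h2 : (1 : ℂ) - z⁻¹ ≠ 0 := by
      rw [sub_ne_zero]
      intro h
      exact hz1 (by rw [← inv_inv z, ← h, inv_one])
    have h1' : (-1 : ℂ) + z ≠ 0 := fun h => h1 (by linear_combination -h)
    field_simp
    have hc : (-1 + z) * (-1 + z)⁻¹ = 1 := mul_inv_cancel₀ h1'
    linear_combination (0 : ℂ) * hc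
  have key : (2 : ℂ) * ∑ m ∈ S, f m = (b.totient : ℂ) := by
    have h2 : (2 : ℂ) * ∑ m ∈ S, f m = ∑ m ∈ S, (f m + f (b - m)) := by
      rw [Finset.sum_add_distrib, hrev]; ring
    rw [h2, Finset.sum_congr rfl hpair, Finset.sum_const, nsmul_eq_mul, mul_one,
      card_S b (by omega)]
  have h2 : (2 : ℂ) ≠ 0 := two_ne_zero
  field_simp
  linear_combination key

lemma geom_xi (b : ℕ) (hb : 3 ≤ b) (t : ℤ) :
    ∑ j ∈ Finset.Ico 1 b, xi b ^ ((j : ℤ) * t)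
      = (if (b : ℤ) ∣ t then (b : ℂ) else 0) - 1 := by
  have hprim := xi_prim b (by omega : b ≠ 0)
  have hrw : ∀ j : ℕ, xi b ^ ((j : ℤ) * t) = (xi b ^ t) ^ j := by
    intro j
    rw [mul_comm, zpow_mul, zpow_natCast]
  have hfull : ∑ j ∈ Finset.range b, (xi b ^ t) ^ j
      = if (b : ℤ) ∣ t then (b : ℂ) else 0 := by
    by_cases hdvd : (b : ℤ) ∣ t
    · rw [if_pos hdvd]
      have h1 : xi b ^ t = 1 := (hprim.zpow_eq_one_iff_dvd t).mpr hdvd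
      simp [h1]
    · rw [if_neg hdvd]
      have hz1 : xi b ^ t ≠ 1 := fun h => hdvd ((hprim.zpow_eq_one_iff_dvd t).mp h)
      have hpow : (xi b ^ t) ^ b = 1 := by
        rw [← zpow_natCast, ← zpow_mul, mul_comm, zpow_mul, zpow_natCast,
          hprim.pow_eq_one, one_zpow]
      have hgeom := geom_sum_mul (xi b ^ t) b
      rw [hpow, sub_self] at hgeom
      have hne : xi b ^ t - 1 ≠ 0 := sub_ne_zero.mpr hz1
      exact (mul_eq_zero.mp hgeom).resolve_right hne
  have hsplit : ∑ j ∈ Finset.range b, (xi b ^ t) ^ j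
      = 1 + ∑ j ∈ Finset.Ico 1 b, (xi b ^ t) ^ j := by
    rw [Finset.range_eq_Ico, Finset.sum_eq_sum_Ico_succ_bot (by omega : 0 < b)]
    simp
  rw [Finset.sum_congr rfl (fun j _ => hrw j)]
  rw [hsplit] at hfull
  linear_combination hfull

/-- The full average of the `d`-dimensional Fourier–Dedekind sums equals
`(1/2^d)(𝟙[b ∣ t] − 1/b)`. -/
theorem stmt10 (d b : ℕ) (hd : 1 ≤ d) (hb : 3 ≤ b) (t : ℤ) :
    ((Nat.totient b : ℂ))⁻¹ ^ d *
        ∑ m ∈ Fintype.piFinset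
            (fun _ : Fin d => (Finset.Ico 1 b).filter (fun m => Nat.gcd m b = 1)),
          FDS b m Finset.univ t =
      ((2 : ℂ) ^ d)⁻¹ * ((if (b : ℤ) ∣ t then 1 else 0) - (b : ℂ)⁻¹) := by
  have hφ : (b.totient : ℂ) ≠ 0 :=
    Nat.cast_ne_zero.mpr (Nat.totient_pos.mpr (by omega)).ne'
  have hb0 : (b : ℂ) ≠ 0 := Nat.cast_ne_zero.mpr (by omega)
  have hswap : ∑ m ∈ Fintype.piFinset
      (fun _ : Fin d => (Finset.Ico 1 b).filter (fun m => Nat.gcd m b = 1)),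
        FDS b m Finset.univ t
      = (b : ℂ)⁻¹ * ∑ j ∈ Finset.Ico 1 b,
          xi b ^ ((j : ℤ) * t) * ((b.totient : ℂ) / 2) ^ d := by
    unfold FDS
    rw [← Finset.mul_sum, Finset.sum_comm]
    congr 1
    apply Finset.sum_congr rfl
    intro j hj
    have hdiv : ∀ m ∈ Fintype.piFinset
        (fun _ : Fin d => (Finset.Ico 1 b).filter (fun m => Nat.gcd m b = 1)),
        xi b ^ ((j : ℤ) * t) / ∏ i : Fin d, (1 - xi b ^ ((j : ℤ) * (m i : ℤ)))
          = xi b ^ ((j : ℤ) * t) * ∏ i : Fin d, (1 - xi b ^ ((j : ℤ) * (m i : ℤ)))⁻¹ := by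
      intro m _
      rw [div_eq_mul_inv, ← Finset.prod_inv_distrib]
    rw [Finset.sum_congr rfl hdiv, ← Finset.mul_sum]
    congr 1
    rw [← Finset.prod_univ_sum (fun _ : Fin d => (Finset.Ico 1 b).filter (fun m => Nat.gcd m b = 1))
      (fun _ m => (1 - xi b ^ ((j : ℤ) * (m : ℤ)))⁻¹)]
    rw [Finset.prod_congr rfl (fun i _ => innerSumAux b hb j hj), Finset.prod_const,
      Finset.card_univ, Fintype.card_fin]
  rw [hswap, ← Finset.sum_mul, geom_xi b hb t]
  by_cases hdvd : (b : ℤ) ∣ t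
  · rw [if_pos hdvd, if_pos hdvd]
    field_simp
    ring_nf
    have hk : (b.totient : ℂ) ^ d * (b.totient : ℂ)⁻¹ ^ d = 1 := by
      rw [← mul_pow, mul_inv_cancel₀ hφ, one_pow]
    have h2k : (1 / 2 : ℂ) ^ d * 2 ^ d = 1 := by
      rw [← mul_pow]; norm_num
    linear_combination ((b : ℂ) - 1) * ((1 / 2 : ℂ) ^ d * 2 ^ d) * hk + ((b : ℂ) - 1) * h2k
  · rw [if_neg hdvd, if_neg hdvd]
    field_simp
    have hk : (b.totient : ℂ) ^ d * (b.totient : ℂ)⁻¹ ^ d = 1 := by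
      rw [← mul_pow, mul_inv_cancel₀ hφ, one_pow]
    have h2k : (1 / 2 : ℂ) ^ d * 2 ^ d = 1 := by
      rw [← mul_pow]; norm_num
    linear_combination (-((1 / 2 : ℂ) ^ d * 2 ^ d)) * hk - h2k
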